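/- Connectivity of the core (Theorem 1(ii)): suppose 0 < ε < 1 and the initial charge is concentrated at a single vertex i0. Then for every time t, the subgraph of G induced by the vertex set {i ∈ V : x_i^t > ε} ∪ {i0} is connected. -/

import Mathlib

private lemma induce_singleton_connected {V : Type*} (G : SimpleGraph V) (v : V) :
    (G.induce {v}).Connected := by
  have : Nonempty ({v} : Set V) := ⟨⟨v, rfl⟩⟩
  constructor
  intro a b
  have hab : a = b := Subsingleton.elim a b
  exact hab ▸ SimpleGraph.Reachable.refl a

private lemma induce_connected_extend {V : Type*} (G : SimpleGraph V) {A B : Set V}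
    (hAB : A ⊆ B) (hA : (G.induce A).Connected)
    (h : ∀ b ∈ B, b ∈ A ∨ ∃ a ∈ A, G.Adj a b) :
    (G.induce B).Connected := by
  obtain ⟨⟨u, hu⟩⟩ := hA.nonempty
  apply G.induce_connected_of_patches u (hAB hu)
  intro v hv
  rcases h v hv with hvA | ⟨a, haA, hadj⟩
  · exact ⟨A, hAB, hu, hvA, hA.preconnected _ _⟩
  · refine ⟨A ∪ {v}, ?_, Or.inl hu, Or.inr rfl, ?_⟩
    · rintro w (hw | rfl)
      · exact hAB hw
      · exact hv
    · exact (SimpleGraph.connected_induce_union hA.preconnected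
        (induce_singleton_connected G v).preconnected haA rfl hadj).preconnected _ _

theorem core_connected
    {V : Type*} [Fintype V] [DecidableEq V]
    (G : SimpleGraph V) [DecidableRel G.Adj]
    (hdeg : ∀ i : V, 0 < G.degree i)
    (ε : ℝ) (x : ℕ → V → ℝ)
    (hupd : ∀ (t : ℕ) (i : V),
      x (t + 1) i =
        (ε + (x t i - ε) / 2) * (if ε < x t i then (1 : ℝ) else 0)
          + x t i * (1 - (if ε < x t i then (1 : ℝ) else 0))
          + (1 / 2) * ∑ j ∈ G.neighborFinset i,
              (if ε < x t j then (1 : ℝ) else 0) * (x t j - ε) / (G.degree j))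
    (hε0 : 0 < ε) (hε1 : ε < 1)
    (i0 : V) (hinit : x 0 i0 = 1) (hinit' : ∀ i : V, i ≠ i0 → x 0 i = 0) :
    ∀ t : ℕ, (G.induce ({i : V | ε < x t i} ∪ {i0})).Connected := by
  -- each summand is nonnegative
  have hterm : ∀ (t : ℕ) (j : V),
      0 ≤ (if ε < x t j then (1 : ℝ) else 0) * (x t j - ε) / (G.degree j) := by
    intro t j
    by_cases hj : ε < x t j
    · simp only [hj, if_pos, one_mul]
      exact div_nonneg (by linarith) (by positivity)
    · simp [hj]
  have hsum : ∀ (t : ℕ) (i : V),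
      0 ≤ ∑ j ∈ G.neighborFinset i,
        (if ε < x t j then (1 : ℝ) else 0) * (x t j - ε) / (G.degree j) :=
    fun t i => Finset.sum_nonneg fun j _ => hterm t j
  -- core vertices stay core
  have hmono : ∀ (t : ℕ) (i : V), ε < x t i → ε < x (t + 1) i := by
    intro t i hi
    rw [hupd t i]
    simp only [hi, if_pos]
    have := hsum t i
    nlinarith
  -- a new core vertex has an old core neighbor
  have hnew : ∀ (t : ℕ) (i : V), ε < x (t + 1) i → ¬ ε < x t i →
      ∃ j, G.Adj i j ∧ ε < x t j := by
    intro t i hi1 hi0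
    rw [hupd t i] at hi1
    simp only [hi0, if_neg, not_false_iff] at hi1
    have hS : 0 < ∑ j ∈ G.neighborFinset i,
        (if ε < x t j then (1 : ℝ) else 0) * (x t j - ε) / (G.degree j) := by
      push_neg at hi0
      nlinarith
    have : ∃ j ∈ G.neighborFinset i,
        (0 : ℝ) < (if ε < x t j then (1 : ℝ) else 0) * (x t j - ε) / (G.degree j) := by
      by_contra hc
      push_neg at hc
      have : ∑ j ∈ G.neighborFinset i,
          (if ε < x t j then (1 : ℝ) else 0) * (x t j - ε) / (G.degree j) ≤ 0 :=
        Finset.sum_nonpos fun j hj => hc j hj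
      linarith
    obtain ⟨j, hjmem, hjpos⟩ := this
    refine ⟨j, (G.mem_neighborFinset i j).mp hjmem, ?_⟩
    by_contra hj
    simp [hj] at hjpos
  -- i0 is always core
  have hi0core : ∀ t : ℕ, ε < x t i0 := by
    intro t
    induction t with
    | zero => rw [hinit]; exact hε1
    | succ t ih => exact hmono t i0 ih
  intro t
  induction t with
  | zero =>
    have hset : ({i : V | ε < x 0 i} ∪ {i0} : Set V) = {i0} := by
      ext i
      simp only [Set.mem_union, Set.mem_setOf_eq, Set.mem_singleton_iff]
      constructor
      · rintro (hi | rfl)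
        · by_contra hne
          rw [hinit' i hne] at hi
          linarith
        · rfl
      · rintro rfl
        exact Or.inr rfl
    rw [hset]
    exact induce_singleton_connected G i0
  | succ t ih =>
    refine induce_connected_extend G ?_ ih ?_
    · rintro i (hi | hi)
      · exact Or.inl (hmono t i hi)
      · exact Or.inr hi
    · rintro i (hi | hi)
      · by_cases hiold : ε < x t i
        · exact Or.inl (Or.inl hiold)
        · obtain ⟨j, hadj, hj⟩ := hnew t i hi hiold
          exact Or.inr ⟨j, Or.inl hj, hadj.symm⟩
      · exact Or.inl (Or.inr hi)
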